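/- Let G be an abelian group and let f, g : G → ℂ satisfy the sine addition law f(xy) = f(x) g(y) + g(x) f(y) for all x, y ∈ G, with f not identically zero. Then either (a) there exist a multiplicative function φ : G → ℂ and a nonzero constant c with g = φ/2 and f = cφ, or (b) there exist distinct multiplicative functions φ, ψ : G → ℂ and a nonzero constant c with g = (φ+ψ)/2 and f = c(φ-ψ), or (c) g is multiplicative (g(xy) = g(x)g(y)) and f satisfies f(xy) = f(x) g(y) + g(x) f(y) with g multiplicative. -/

import Mathlib

theorem stmt_10 {G : Type*} [CommGroup G] (f g : G → ℂ)
    (hfg : ∀ x y, f (x * y) = f x * g y + g x * f y)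
    (hf0 : f ≠ 0) :
    (∃ (φ : G → ℂ) (c : ℂ), c ≠ 0 ∧ (∀ x y, φ (x * y) = φ x * φ y) ∧
        (∀ x, g x = φ x / 2) ∧ (∀ x, f x = c * φ x)) ∨
    (∃ (φ ψ : G → ℂ) (c : ℂ), c ≠ 0 ∧ φ ≠ ψ ∧
        (∀ x y, φ (x * y) = φ x * φ y) ∧ (∀ x y, ψ (x * y) = ψ x * ψ y) ∧
        (∀ x, g x = (φ x + ψ x) / 2) ∧ (∀ x, f x = c * (φ x - ψ x))) ∨
    (∀ x y, g (x * y) = g x * g y) := by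
  obtain ⟨x0, hx0⟩ : ∃ x, f x ≠ 0 := by
    by_contra h; push_neg at h; exact hf0 (funext h)
  have key : ∀ x y z : G, f x * (g (y*z) - g y * g z) = f z * (g (x*y) - g x * g y) := by
    intro x y z
    have h1 := hfg (x*y) z
    rw [mul_assoc, hfg x (y*z), hfg x y, hfg y z] at h1
    linear_combination h1
  set α := (g (x0*x0) - g x0 * g x0) / (f x0 * f x0) with hα
  have hg2 : ∀ x y, g (x*y) = g x * g y + α * (f x * f y) := by
    intro x y
    have k1 := key x y x0
    have k2 := key y x0 x0
    rw [hα]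
    field_simp
    linear_combination -f x0 * k1 - f x * k2
  by_cases hα0 : α = 0
  · right; right
    intro x y
    have := hg2 x y
    simpa [hα0] using this
  · right; left
    obtain ⟨b, hb⟩ := IsAlgClosed.exists_pow_nat_eq α (n := 2) (by norm_num)
    have hb' : b * b = α := by rw [← hb]; ring
    have hb0 : b ≠ 0 := by
      intro h; apply hα0; rw [← hb', h, mul_zero]
    refine ⟨fun x => g x + b * f x, fun x => g x - b * f x, 1/(2*b), ?_, ?_, ?_, ?_, ?_, ?_⟩
    · simp [hb0]
    · intro h
      have := congrFun h x0
      apply hx0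
      have : 2 * b * f x0 = 0 := by linear_combination this
      rcases mul_eq_zero.mp this with h' | h'
      · exact absurd h' (by simpa using hb0)
      · exact h'
    · intro x y
      simp only
      linear_combination hg2 x y + b * hfg x y - (f x * f y) * hb'
    · intro x y
      simp only
      linear_combination hg2 x y - b * hfg x y - (f x * f y) * hb'
    · intro x; ring
    · intro x; field_simp; ring
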